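/- arXiv:1002.2666 — 3 statements merged into one kernel-verified Lean document; each statement's English description precedes it below -/
import Mathlib

section
/- The function φ_4(x) = x^{-k}·e^x·L_m^{-k}(-x) satisfies x·φ_4'' + (k+1-x)·φ_4' = (m+1)·φ_4 for x > 0, every nonnegative integer m, and real k. -/
open Polynomial Finset

/-- Associated Laguerre polynomial `L_n^k(x) = ∑_{i=0}^n (-1)^i C(n+k, n-i) x^i / i!`. -/
noncomputable def lag (n : ℕ) (k : ℝ) (x : ℝ) : ℝ :=
  ∑ i ∈ Finset.range (n + 1),
    (-1 : ℝ) ^ i * (∏ j ∈ Finset.range (n - i), (k + (i : ℝ) + 1 + (j : ℝ))) /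
      (Nat.factorial (n - i) : ℝ) * x ^ i / (Nat.factorial i : ℝ)

noncomputable def lagC (n : ℕ) (α : ℝ) (i : ℕ) : ℝ :=
  if i ≤ n then
    (-1 : ℝ) ^ i * (∏ j ∈ Finset.range (n - i), (α + (i : ℝ) + 1 + (j : ℝ))) /
      (Nat.factorial (n - i) : ℝ) / (Nat.factorial i : ℝ)
  else 0

noncomputable def lagP (n : ℕ) (α : ℝ) : Polynomial ℝ :=
  ∑ i ∈ Finset.range (n + 1), Polynomial.C (lagC n α i) * Polynomial.X ^ i

lemma lag_eval (n : ℕ) (α x : ℝ) : lag n α x = (lagP n α).eval x := by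
  unfold lag lagP lagC
  rw [Polynomial.eval_finset_sum]
  refine Finset.sum_congr rfl fun i hi => ?_
  rw [Finset.mem_range] at hi
  rw [Polynomial.eval_mul, Polynomial.eval_C, Polynomial.eval_pow, Polynomial.eval_X,
    if_pos (Nat.lt_succ_iff.mp hi)]
  ring

lemma lagP_coeff (n : ℕ) (α : ℝ) (j : ℕ) : (lagP n α).coeff j = lagC n α j := by
  unfold lagP
  rw [Polynomial.finset_sum_coeff]
  simp only [Polynomial.coeff_C_mul, Polynomial.coeff_X_pow]
  rw [Finset.sum_eq_single j]
  · simp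
  · intro i _ hij
    simp [(Ne.symm hij)]
  · intro hj
    rw [Finset.mem_range, not_lt] at hj
    rw [lagC, if_neg (by omega)]
    simp

lemma lagC_rec (n : ℕ) (α : ℝ) (i : ℕ) :
    ((i : ℝ) + 1) * (α + (i : ℝ) + 1) * lagC n α (i + 1) = ((i : ℝ) - (n : ℝ)) * lagC n α i := by
  unfold lagC
  rcases lt_trichotomy i n with h | h | h
  · rw [if_pos (by omega : i + 1 ≤ n), if_pos h.le]
    have h1 : n - i = (n - (i + 1)) + 1 := by omega
    rw [h1, Finset.prod_range_succ']
    have h2 : ∀ j ∈ Finset.range (n - (i + 1)), (α + (i : ℝ) + 1 + ((j + 1 : ℕ) : ℝ))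
        = (α + ((i + 1 : ℕ) : ℝ) + 1 + (j : ℝ)) := by
      intro j _; push_cast; ring
    rw [Finset.prod_congr rfl h2]
    have h3 : ((i : ℝ) - (n : ℝ)) = -(((n - i : ℕ) : ℝ)) := by
      rw [Nat.cast_sub h.le]; ring
    rw [h3, h1, Nat.factorial_succ (n - (i+1)), Nat.factorial_succ i]
    have hf1 : ((Nat.factorial (n - (i+1)) : ℝ)) ≠ 0 := Nat.cast_ne_zero.mpr (Nat.factorial_ne_zero _)
    have hf2 : ((Nat.factorial i : ℝ)) ≠ 0 := Nat.cast_ne_zero.mpr (Nat.factorial_ne_zero _)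
    have hf3 : ((n - (i+1) : ℕ) : ℝ) + 1 ≠ 0 := by positivity
    push_cast
    field_simp
    ring
  · subst h
    rw [if_neg (by omega), if_pos le_rfl]
    simp
  · rw [if_neg (by omega), if_neg (by omega)]
    simp

lemma lagP_ode (n : ℕ) (α : ℝ) :
    X * derivative (derivative (lagP n α)) + (C (α + 1) - X) * derivative (lagP n α)
      + C (n : ℝ) * lagP n α = 0 := by
  ext j
  rcases j with _ | j
  · simp only [coeff_add, coeff_zero, sub_mul, coeff_sub, mul_coeff_zero, coeff_X_zero,
      zero_mul, coeff_C_mul, coeff_derivative, lagP_coeff, coeff_C_zero]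
    have hrec := lagC_rec n α 0
    push_cast at hrec ⊢
    linear_combination hrec
  · simp only [coeff_add, coeff_zero, sub_mul, coeff_sub, coeff_X_mul, coeff_C_mul,
      coeff_derivative, lagP_coeff]
    have hrec := lagC_rec n α (j + 1)
    push_cast at hrec ⊢
    linear_combination hrec

lemma lag_ode (n : ℕ) (α s : ℝ) :
    s * ((derivative (derivative (lagP n α))).eval s)
      + (α + 1 - s) * ((derivative (lagP n α)).eval s) + (n : ℝ) * (lagP n α).eval s = 0 := by
  have h := congrArg (Polynomial.eval s) (lagP_ode n α)
  simpa using h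

/--  is a formal eigenfunction of the Laguerre
operator with eigenvalue , for . -/
theorem laguerre_formal_eigenfunction_phi4 (m : ℕ) (k x : ℝ) (hx : 0 < x) :
    x * deriv (deriv (fun t => Real.rpow t (-k) * Real.exp t * lag m (-k) (-t))) x +
      (k + 1 - x) * deriv (fun t => Real.rpow t (-k) * Real.exp t * lag m (-k) (-t)) x
      = ((m : ℝ) + 1) * (Real.rpow x (-k) * Real.exp x * lag m (-k) (-x)) := by
  set p : Polynomial ℝ := lagP m (-k) with hp
  have hfun : (fun t => Real.rpow t (-k) * Real.exp t * lag m (-k) (-t))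
      = fun t : ℝ => t ^ (-k) * Real.exp t * p.eval (-t) := by
    funext t
    rw [lag_eval]
    rfl
  rw [hfun, lag_eval]
  set f : ℝ → ℝ := fun t : ℝ => t ^ (-k) * Real.exp t * p.eval (-t) with hf
  set f1 : ℝ → ℝ := fun t : ℝ =>
    ((-k) * t ^ (-k - 1) * Real.exp t + t ^ (-k) * Real.exp t) * p.eval (-t)
      + t ^ (-k) * Real.exp t * (p.derivative.eval (-t) * (-1)) with hf1
  have hder : ∀ t ∈ Set.Ioi (0 : ℝ), HasDerivAt f (f1 t) t := by
    intro t ht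
    have h1 : HasDerivAt (fun t : ℝ => t ^ (-k)) ((-k) * t ^ (-k - 1)) t :=
      Real.hasDerivAt_rpow_const (Or.inl (ne_of_gt ht))
    have h2 : HasDerivAt Real.exp (Real.exp t) t := Real.hasDerivAt_exp t
    have h3 : HasDerivAt (fun t : ℝ => p.eval (-t)) (p.derivative.eval (-t) * (-1)) t := by
      have := (p.hasDerivAt (-t)).comp t (hasDerivAt_neg t)
      simpa [Function.comp_def] using this
    exact (h1.mul h2).mul h3
  have hev : deriv f =ᶠ[nhds x] f1 := by
    filter_upwards [Ioi_mem_nhds hx] with t ht using (hder t ht).deriv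
  -- second derivative
  have h1 : HasDerivAt (fun t : ℝ => t ^ (-k)) ((-k) * x ^ (-k - 1)) x :=
    Real.hasDerivAt_rpow_const (Or.inl (ne_of_gt hx))
  have h1' : HasDerivAt (fun t : ℝ => t ^ (-k - 1)) ((-k - 1) * x ^ (-k - 1 - 1)) x :=
    Real.hasDerivAt_rpow_const (Or.inl (ne_of_gt hx))
  have h2 : HasDerivAt Real.exp (Real.exp x) x := Real.hasDerivAt_exp x
  have h3 : HasDerivAt (fun t : ℝ => p.eval (-t)) (p.derivative.eval (-x) * (-1)) x := by
    have := (p.hasDerivAt (-x)).comp x (hasDerivAt_neg x)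
    simpa [Function.comp_def] using this
  have h4 : HasDerivAt (fun t : ℝ => p.derivative.eval (-t))
      ((Polynomial.derivative (Polynomial.derivative p)).eval (-x) * (-1)) x := by
    have := (p.derivative.hasDerivAt (-x)).comp x (hasDerivAt_neg x)
    simpa [Function.comp_def] using this
  have hg1 : HasDerivAt (fun t : ℝ => (-k) * t ^ (-k - 1) * Real.exp t + t ^ (-k) * Real.exp t)
      (((-k) * ((-k - 1) * x ^ (-k - 1 - 1)) * Real.exp x + (-k) * x ^ (-k - 1) * Real.exp x)
        + ((-k) * x ^ (-k - 1) * Real.exp x + x ^ (-k) * Real.exp x)) x :=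
    ((h1'.const_mul (-k)).mul h2).add (h1.mul h2)
  have hg2 : HasDerivAt (fun t : ℝ => t ^ (-k) * Real.exp t * (p.derivative.eval (-t) * (-1)))
      (((-k) * x ^ (-k - 1) * Real.exp x + x ^ (-k) * Real.exp x)
          * (p.derivative.eval (-x) * (-1))
        + x ^ (-k) * Real.exp x
          * ((Polynomial.derivative (Polynomial.derivative p)).eval (-x) * (-1) * (-1))) x :=
    ((h1.mul h2).mul (h4.mul_const (-1)))
  have hf2 : HasDerivAt f1
      ((((-k) * ((-k - 1) * x ^ (-k - 1 - 1)) * Real.exp x + (-k) * x ^ (-k - 1) * Real.exp x)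
          + ((-k) * x ^ (-k - 1) * Real.exp x + x ^ (-k) * Real.exp x)) * p.eval (-x)
        + ((-k) * x ^ (-k - 1) * Real.exp x + x ^ (-k) * Real.exp x)
            * (p.derivative.eval (-x) * (-1))
        + (((-k) * x ^ (-k - 1) * Real.exp x + x ^ (-k) * Real.exp x)
              * (p.derivative.eval (-x) * (-1))
            + x ^ (-k) * Real.exp x
              * ((Polynomial.derivative (Polynomial.derivative p)).eval (-x) * (-1) * (-1)))) x := by
    exact (hg1.mul h3).add hg2
  have hderiv1 : deriv f x = f1 x := (hder x hx).deriv
  rw [hev.deriv_eq, hf2.deriv, hderiv1]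
  simp only [hf1]
  have hrpow : Real.rpow x (-k) = x ^ (-k) := rfl
  rw [hrpow, ← hp]
  -- rpow relations
  have hb : x * x ^ (-k - 1) = x ^ (-k) := by
    have h := (Real.rpow_add hx 1 (-k - 1)).symm
    rw [Real.rpow_one] at h
    rw [h, show (1 : ℝ) + (-k - 1) = -k by ring]
  have hc : x * x ^ (-k - 1 - 1) = x ^ (-k - 1) := by
    have h := (Real.rpow_add hx 1 (-k - 1 - 1)).symm
    rw [Real.rpow_one] at h
    rw [h, show (1 : ℝ) + (-k - 1 - 1) = -k - 1 by ring]
  have hode := lag_ode m (-k) (-x)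
  rw [← hp] at hode
  linear_combination (Real.exp x * Polynomial.eval (-x) p * k * (k + 1)) * hc
    + (Real.exp x * (-(k * Polynomial.eval (-x) p)
        + 2 * k * Polynomial.eval (-x) (Polynomial.derivative p))) * hb
    - (x ^ (-k) * Real.exp x) * hode
end

section
/- Isospectral factorization underlying the L1 family: with ξ_{k,m}(x) = L_m^k(-x), A^I_{k,m}(y) = ξ_{k,m}·y' - ξ_{k+1,m}·y, and B^I_{k,m}(y) = (x·y' + (1+k)·y)/ξ_{k,m}, the operator identity L_k = B^I_{k,m} ∘ A^I_{k,m} + (k+m+1) holds, where L_k(y) = x·y'' + (k+1-x)·y'. -/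
/-- Laguerre polynomial with integer index, zero for negative index. -/
noncomputable def lagZ (j : ℤ) (k : ℝ) (x : ℝ) : ℝ :=
  if 0 ≤ j then lag j.toNat k x else 0

/-- xi_{k,m}(x) = L_m^k(-x). -/
noncomputable def xi (k : ℝ) (m : ℕ) (x : ℝ) : ℝ := lag m k (-x)

/-- eta_{k,m}(x) = L_m^{-k}(x). -/
noncomputable def eta (k : ℝ) (m : ℕ) (x : ℝ) : ℝ := lag m (-k) x

/-- Coefficient of x^i in lag n k. -/
noncomputable def lco (n : ℕ) (k : ℝ) (i : ℕ) : ℝ :=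
  (-1 : ℝ) ^ i * (∏ j ∈ Finset.range (n - i), (k + (i : ℝ) + 1 + (j : ℝ))) /
    (Nat.factorial (n - i) : ℝ) / (Nat.factorial i : ℝ)

lemma lag_eq (n : ℕ) (k : ℝ) (x : ℝ) :
    lag n k x = ∑ i ∈ Finset.range (n + 1), lco n k i * x ^ i := by
  unfold lag lco
  refine Finset.sum_congr rfl fun i _ => by ring

/-- Derivative of lag n k. -/
noncomputable def dlag (n : ℕ) (k x : ℝ) : ℝ :=
  ∑ i ∈ Finset.range (n + 1), lco n k i * ((i : ℝ) * x ^ (i - 1))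

lemma hasDerivAt_lag (n : ℕ) (k x : ℝ) :
    HasDerivAt (fun t => lag n k t) (dlag n k x) x := by
  have h : (fun t => lag n k t) = fun t => ∑ i ∈ Finset.range (n + 1), lco n k i * t ^ i :=
    funext (lag_eq n k)
  rw [h]
  exact HasDerivAt.fun_sum fun i _ => (hasDerivAt_pow i x).const_mul _

lemma prod_shift (a : ℝ) (N : ℕ) :
    a * ∏ j ∈ Finset.range N, (a + 1 + (j : ℝ))
      = (a + N) * ∏ j ∈ Finset.range N, (a + (j : ℝ)) := by
  have h1 : ∏ j ∈ Finset.range (N + 1), (a + (j : ℝ))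
      = (∏ j ∈ Finset.range N, (a + 1 + (j : ℝ))) * a := by
    rw [Finset.prod_range_succ']
    congr 1
    · exact Finset.prod_congr rfl fun j _ => by push_cast; ring
    · norm_num
  have h2 : ∏ j ∈ Finset.range (N + 1), (a + (j : ℝ))
      = (∏ j ∈ Finset.range N, (a + (j : ℝ))) * (a + N) :=
    Finset.prod_range_succ _ _
  rw [h1] at h2
  linear_combination h2

lemma coef2 (k : ℝ) (i N : ℕ) :
    (k + 1 + i) * lco (i + N) (k + 1) i = (k + ((i : ℝ) + N) + 1) * lco (i + N) k i := by
  unfold lco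
  rw [Nat.add_sub_cancel_left]
  have hprod := prod_shift (k + i + 1) N
  have e1 : ∏ j ∈ Finset.range N, (k + (i : ℝ) + 1 + 1 + (j : ℝ))
      = ∏ j ∈ Finset.range N, (k + 1 + (i : ℝ) + 1 + (j : ℝ)) :=
    Finset.prod_congr rfl fun j _ => by ring
  rw [e1] at hprod
  field_simp
  linear_combination hprod

lemma coef1 (k : ℝ) (i M : ℕ) :
    lco (i + (M + 1)) (k + 1) i - lco (i + (M + 1)) k i
      = -(((i : ℝ) + 1) * lco (i + (M + 1)) k (i + 1)) := by
  unfold lco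
  rw [Nat.add_sub_cancel_left]
  have h : i + (M + 1) - (i + 1) = M := by omega
  rw [h]
  have h1 : ∏ j ∈ Finset.range (M + 1), (k + 1 + (i : ℝ) + 1 + (j : ℝ))
      = (∏ j ∈ Finset.range M, (k + ((i : ℝ) + 1) + 1 + (j : ℝ))) * (k + 1 + i + 1 + M) := by
    rw [Finset.prod_range_succ]
    congr 1
    exact Finset.prod_congr rfl fun j _ => by ring
  have h2 : ∏ j ∈ Finset.range (M + 1), (k + (i : ℝ) + 1 + (j : ℝ))
      = (∏ j ∈ Finset.range M, (k + ((i : ℝ) + 1) + 1 + (j : ℝ))) * (k + i + 1) := by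
    rw [Finset.prod_range_succ']
    congr 1
    · exact Finset.prod_congr rfl fun j _ => by push_cast; ring
    · norm_num
  rw [h1, h2, pow_succ]
  rw [Nat.factorial_succ (M), Nat.factorial_succ i]
  push_cast
  have hM : (Nat.factorial M : ℝ) ≠ 0 := Nat.cast_ne_zero.mpr (Nat.factorial_ne_zero M)
  have hi : (Nat.factorial i : ℝ) ≠ 0 := Nat.cast_ne_zero.mpr (Nat.factorial_ne_zero i)
  field_simp
  ring

lemma pow_aux (t : ℝ) (i : ℕ) : t * ((i : ℝ) * t ^ (i - 1)) = (i : ℝ) * t ^ i := by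
  cases i with
  | zero => simp
  | succ j => rw [Nat.add_sub_cancel]; push_cast; ring

lemma id2 (k : ℝ) (m : ℕ) (t : ℝ) :
    t * dlag m (k + 1) t + (k + 1) * lag m (k + 1) t = (k + m + 1) * lag m k t := by
  rw [lag_eq, lag_eq]
  unfold dlag
  rw [Finset.mul_sum, Finset.mul_sum, Finset.mul_sum, ← Finset.sum_add_distrib]
  refine Finset.sum_congr rfl fun i hi => ?_
  obtain ⟨N, rfl⟩ : ∃ N, m = i + N :=
    le_iff_exists_add.mp (Nat.lt_succ_iff.mp (Finset.mem_range.mp hi))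
  have h1 : t * (lco (i + N) (k + 1) i * ((i : ℝ) * t ^ (i - 1)))
      = lco (i + N) (k + 1) i * ((i : ℝ) * t ^ i) := by
    rw [← pow_aux t i]; ring
  rw [h1]
  have := coef2 k i N
  push_cast
  linear_combination t ^ i * this

lemma id1 (k : ℝ) (m : ℕ) (t : ℝ) :
    lag m (k + 1) t - lag m k t = -(dlag m k t) := by
  rw [lag_eq, lag_eq]
  unfold dlag
  have hL : ((∑ i ∈ Finset.range (m + 1), lco m (k + 1) i * t ^ i)
        - ∑ i ∈ Finset.range (m + 1), lco m k i * t ^ i)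
      = ∑ i ∈ Finset.range m, (lco m (k + 1) i - lco m k i) * t ^ i := by
    rw [← Finset.sum_sub_distrib, Finset.sum_range_succ]
    have hlast : lco m (k + 1) m * t ^ m - lco m k m * t ^ m = 0 := by
      unfold lco; rw [Nat.sub_self]; simp
    rw [hlast, add_zero]
    exact Finset.sum_congr rfl fun i _ => by ring
  rw [hL, Finset.sum_range_succ']
  simp only [Nat.cast_zero, zero_mul, mul_zero, add_zero, Nat.add_sub_cancel]
  rw [← Finset.sum_neg_distrib]
  refine Finset.sum_congr rfl fun i hi => ?_
  obtain ⟨M, rfl⟩ : ∃ M, m = i + (M + 1) := by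
    have := Finset.mem_range.mp hi; exact ⟨m - i - 1, by omega⟩
  have := coef1 k i M
  push_cast
  linear_combination t ^ i * this

lemma hasDerivAt_xi_raw (k : ℝ) (m : ℕ) (x : ℝ) :
    HasDerivAt (fun t => xi k m t) (-(dlag m k (-x))) x := by
  have h := (hasDerivAt_lag m k (-x)).comp x (hasDerivAt_neg x)
  simpa [xi, Function.comp_def] using h

lemma hasDerivAt_xi (k : ℝ) (m : ℕ) (x : ℝ) :
    HasDerivAt (fun t => xi k m t) (xi (k + 1) m x - xi k m x) x := by
  have := hasDerivAt_xi_raw k m x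
  rwa [← id1 k m (-x)] at this

/-- Isospectral factorization underlying the L1 family:
B^I ∘ A^I + (k+m+1) equals the Laguerre operator, wherever xi_{k,m}(x) ≠ 0. -/
theorem L1_isospectral_factorization (k : ℝ) (m : ℕ) (y : ℝ → ℝ) (hy : ContDiff ℝ 2 y)
    (x : ℝ) (hx : xi k m x ≠ 0) :
    (x * deriv (fun t => xi k m t * deriv y t - xi (k + 1) m t * y t) x +
        (1 + k) * (xi k m x * deriv y x - xi (k + 1) m x * y x)) / xi k m x +
      (k + (m : ℝ) + 1) * y x
      = x * deriv (deriv y) x + (k + 1 - x) * deriv y x := by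
  have h1 : Differentiable ℝ y := hy.differentiable two_ne_zero
  have h2 : Differentiable ℝ (deriv y) := by
    have h := (contDiff_succ_iff_deriv (n := 1)).mp (by exact_mod_cast hy)
    exact h.2.2.differentiable one_ne_zero
  set ψ' : ℝ := -(dlag m (k + 1) (-x)) with hψ'
  have hψ : HasDerivAt (fun t => xi (k + 1) m t) ψ' x := hasDerivAt_xi_raw (k + 1) m x
  have hξ : HasDerivAt (fun t => xi k m t) (xi (k + 1) m x - xi k m x) x := hasDerivAt_xi k m x
  have hA : HasDerivAt (fun t => xi k m t * deriv y t - xi (k + 1) m t * y t)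
      ((xi (k + 1) m x - xi k m x) * deriv y x + xi k m x * deriv (deriv y) x
        - (ψ' * y x + xi (k + 1) m x * deriv y x)) x :=
    (hξ.mul (h2 x).hasDerivAt).sub (hψ.mul (h1 x).hasDerivAt)
  rw [hA.deriv]
  have hid2 : x * ψ' + (k + 1) * xi (k + 1) m x = (k + m + 1) * xi k m x := by
    have := id2 k m (-x)
    simp only [xi]
    rw [hψ']
    linarith [this]
  field_simp
  linear_combination (-(y x)) * hid2
end

section
/- The type I exceptional Laguerre polynomial L^I_{k,n,m}(x) = ξ_{k,m}(x)·L_{n-m}^{k-1}(x) + ξ_{k-1,m}(x)·L_{n-m-1}^{k}(x) satisfies the second-order equation x·y'' + (k+1-x)·y' + m·y - 2·(ξ_{k-1,m}'/ξ_{k-1,m})·(x·y' + k·y) = (m-n)·y, for n ≥ m, at all points where ξ_{k-1,m}(x) ≠ 0. -/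
lemma lag_zero (k x : ℝ) : lag 0 k x = 1 := by
  simp [lag]

lemma differentiable_lag (n : ℕ) (k : ℝ) : Differentiable ℝ (lag n k) := by
  unfold lag
  apply Differentiable.fun_sum
  intro i _
  exact (((differentiable_const _).mul (differentiable_pow i)).div_const _)

lemma deriv_lag (n : ℕ) (k : ℝ) :
    deriv (lag (n + 1) k) = fun x => -lag n (k + 1) x := by
  funext x
  unfold lag
  rw [deriv_fun_sum (fun i _ => (((differentiableAt_const _).mul (differentiableAt_pow i)).div_const _))]
  have hterm : ∀ i : ℕ,
      deriv (fun x : ℝ => (-1 : ℝ) ^ i *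
          (∏ j ∈ Finset.range (n + 1 - i), (k + (i : ℝ) + 1 + (j : ℝ))) /
          (Nat.factorial (n + 1 - i) : ℝ) * x ^ i / (Nat.factorial i : ℝ)) x
        = (-1 : ℝ) ^ i *
          (∏ j ∈ Finset.range (n + 1 - i), (k + (i : ℝ) + 1 + (j : ℝ))) /
          (Nat.factorial (n + 1 - i) : ℝ) * ((i : ℝ) * x ^ (i - 1)) / (Nat.factorial i : ℝ) := by
    intro i
    rw [deriv_div_const, deriv_const_mul _ (differentiableAt_pow i), deriv_pow_field]
  simp only [hterm]
  rw [Finset.sum_range_succ']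
  simp only [Nat.cast_zero, zero_mul, mul_zero, zero_div, add_zero]
  rw [← Finset.sum_neg_distrib]
  apply Finset.sum_congr rfl
  intro i hi
  have h1 : n + 1 - (i + 1) = n - i := by omega
  have h2 : (∏ j ∈ Finset.range (n - i), (k + ((i:ℕ)+1 : ℕ) + 1 + (j:ℝ)))
      = ∏ j ∈ Finset.range (n - i), ((k+1) + (i : ℝ) + 1 + (j:ℝ)) := by
    apply Finset.prod_congr rfl
    intro j _
    push_cast; ring
  rw [h1, h2]
  have h3 : ((Nat.factorial (i+1) : ℝ)) = ((i:ℝ)+1) * (Nat.factorial i : ℝ) := by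
    rw [Nat.factorial_succ]; push_cast; ring
  have h4 : (Nat.factorial i : ℝ) ≠ 0 := Nat.cast_ne_zero.mpr (Nat.factorial_ne_zero i)
  have h5 : ((i:ℝ)+1) ≠ 0 := by positivity
  rw [h3]
  simp only [Nat.add_sub_cancel, pow_succ]
  push_cast
  field_simp

lemma lag_R1 (n : ℕ) (k x : ℝ) :
    lag (n+1) k x = lag (n+1) (k+1) x - lag n (k+1) x := by
  have hsplit : ∀ K : ℝ, lag (n+1) K x
      = (∑ i ∈ Finset.range (n+1), (-1:ℝ)^i *
          (∏ j ∈ Finset.range (n+1-i), (K + (i:ℝ) + 1 + (j:ℝ))) /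
          (Nat.factorial (n+1-i) : ℝ) * x^i / (Nat.factorial i : ℝ))
        + (-1:ℝ)^(n+1) * x^(n+1) / (Nat.factorial (n+1) : ℝ) := by
    intro K
    unfold lag
    rw [Finset.sum_range_succ]
    simp
  rw [hsplit k, hsplit (k+1)]
  unfold lag
  have key : ∑ i ∈ Finset.range (n+1), (-1:ℝ)^i *
          (∏ j ∈ Finset.range (n+1-i), (k + (i:ℝ) + 1 + (j:ℝ))) /
          (Nat.factorial (n+1-i) : ℝ) * x^i / (Nat.factorial i : ℝ)
      = ∑ i ∈ Finset.range (n+1), ((-1:ℝ)^i *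
          (∏ j ∈ Finset.range (n+1-i), ((k+1) + (i:ℝ) + 1 + (j:ℝ))) /
          (Nat.factorial (n+1-i) : ℝ) * x^i / (Nat.factorial i : ℝ)
        - (-1:ℝ)^i *
          (∏ j ∈ Finset.range (n-i), ((k+1) + (i:ℝ) + 1 + (j:ℝ))) /
          (Nat.factorial (n-i) : ℝ) * x^i / (Nat.factorial i : ℝ)) := by
    apply Finset.sum_congr rfl
    intro i hi
    have hin : i ≤ n := by simpa [Nat.lt_succ_iff] using hi
    set q := n - i with hq
    have h1 : n + 1 - i = q + 1 := by omega
    rw [h1]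
    have hP1 : (∏ j ∈ Finset.range (q+1), (k + (i:ℝ) + 1 + (j:ℝ)))
        = (k + (i:ℝ) + 1) * ∏ j ∈ Finset.range q, ((k+1) + (i:ℝ) + 1 + (j:ℝ)) := by
      rw [Finset.prod_range_succ']
      rw [mul_comm]
      congr 1
      · push_cast; ring
      · apply Finset.prod_congr rfl; intro j _; push_cast; ring
    have hP2 : (∏ j ∈ Finset.range (q+1), ((k+1) + (i:ℝ) + 1 + (j:ℝ)))
        = (∏ j ∈ Finset.range q, ((k+1) + (i:ℝ) + 1 + (j:ℝ))) * ((k+1) + (i:ℝ) + 1 + (q:ℝ)) := by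
      rw [Finset.prod_range_succ]
    have hF : ((Nat.factorial (q+1) : ℝ)) = ((q:ℝ)+1) * (Nat.factorial q : ℝ) := by
      rw [Nat.factorial_succ]; push_cast; ring
    rw [hP1, hP2, hF]
    have h4 : (Nat.factorial q : ℝ) ≠ 0 := Nat.cast_ne_zero.mpr (Nat.factorial_ne_zero q)
    have h5 : (Nat.factorial i : ℝ) ≠ 0 := Nat.cast_ne_zero.mpr (Nat.factorial_ne_zero i)
    have h6 : ((q:ℝ)+1) ≠ 0 := by positivity
    field_simp
    ring
  rw [key, Finset.sum_sub_distrib]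
  ring

lemma lag_xD (n : ℕ) (k x : ℝ) :
    x * lag n (k+1) x = -((n:ℝ)+1) * lag (n+1) k x + ((n:ℝ)+1+k) * lag n k x := by
  -- e1 : x * lag n (k+1) x as a sum of x^(i+1) terms, top split off
  have e1 : x * lag n (k+1) x
      = (∑ i ∈ Finset.range n, (-1:ℝ)^i *
          (∏ j ∈ Finset.range (n-i), (k + 1 + (i:ℝ) + 1 + (j:ℝ))) /
          (Nat.factorial (n-i) : ℝ) * x^(i+1) / (Nat.factorial i : ℝ))
        + (-1:ℝ)^n * x^(n+1) / (Nat.factorial n : ℝ) := by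
    unfold lag
    rw [Finset.mul_sum, Finset.sum_range_succ]
    congr 1
    · apply Finset.sum_congr rfl; intro i _; ring
    · simp [pow_succ]; ring
  -- e2 : lag (n+1) k x reindexed
  have e2 : lag (n+1) k x
      = ((∑ i ∈ Finset.range n, (-1:ℝ)^(i+1) *
          (∏ j ∈ Finset.range (n-i), (k + (i:ℝ) + 2 + (j:ℝ))) /
          (Nat.factorial (n-i) : ℝ) * x^(i+1) / (Nat.factorial (i+1) : ℝ))
        + (-1:ℝ)^(n+1) * x^(n+1) / (Nat.factorial (n+1) : ℝ))
        + (∏ j ∈ Finset.range (n+1), (k + 1 + (j:ℝ))) / (Nat.factorial (n+1) : ℝ) := by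
    unfold lag
    rw [Finset.sum_range_succ']
    congr 1
    · rw [Finset.sum_range_succ]
      congr 1
      · apply Finset.sum_congr rfl
        intro i hi
        have h1 : n + 1 - (i + 1) = n - i := by omega
        rw [h1]
        have : (∏ j ∈ Finset.range (n-i), (k + ((i:ℕ)+1 : ℕ) + 1 + (j:ℝ)))
            = ∏ j ∈ Finset.range (n-i), (k + (i:ℝ) + 2 + (j:ℝ)) := by
          apply Finset.prod_congr rfl; intro j _; push_cast; ring
        rw [this]
      · have h2 : n + 1 - (n + 1) = 0 := by omega
        rw [h2]
        simp
    · simp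
  -- e3 : lag n k x reindexed
  have e3 : lag n k x
      = (∑ i ∈ Finset.range n, (-1:ℝ)^(i+1) *
          (∏ j ∈ Finset.range (n-1-i), (k + (i:ℝ) + 2 + (j:ℝ))) /
          (Nat.factorial (n-1-i) : ℝ) * x^(i+1) / (Nat.factorial (i+1) : ℝ))
        + (∏ j ∈ Finset.range n, (k + 1 + (j:ℝ))) / (Nat.factorial n : ℝ) := by
    unfold lag
    rw [Finset.sum_range_succ']
    congr 1
    · apply Finset.sum_congr rfl
      intro i hi
      have h1 : n - (i + 1) = n - 1 - i := by omega
      rw [h1]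
      have : (∏ j ∈ Finset.range (n-1-i), (k + ((i:ℕ)+1 : ℕ) + 1 + (j:ℝ)))
          = ∏ j ∈ Finset.range (n-1-i), (k + (i:ℝ) + 2 + (j:ℝ)) := by
        apply Finset.prod_congr rfl; intro j _; push_cast; ring
      rw [this]
    · simp
  -- main per-term identity
  have hsum : ∑ i ∈ Finset.range n, (-1:ℝ)^i *
          (∏ j ∈ Finset.range (n-i), (k + 1 + (i:ℝ) + 1 + (j:ℝ))) /
          (Nat.factorial (n-i) : ℝ) * x^(i+1) / (Nat.factorial i : ℝ)
      = ∑ i ∈ Finset.range n, (((n:ℝ)+1+k) * ((-1:ℝ)^(i+1) *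
          (∏ j ∈ Finset.range (n-1-i), (k + (i:ℝ) + 2 + (j:ℝ))) /
          (Nat.factorial (n-1-i) : ℝ) * x^(i+1) / (Nat.factorial (i+1) : ℝ))
        - ((n:ℝ)+1) * ((-1:ℝ)^(i+1) *
          (∏ j ∈ Finset.range (n-i), (k + (i:ℝ) + 2 + (j:ℝ))) /
          (Nat.factorial (n-i) : ℝ) * x^(i+1) / (Nat.factorial (i+1) : ℝ))) := by
    apply Finset.sum_congr rfl
    intro i hi
    have hin : i < n := Finset.mem_range.mp hi
    have h1 : n - i = (n - 1 - i) + 1 := by omega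
    set r := n - 1 - i with hr
    rw [h1]
    have hP1 : (∏ j ∈ Finset.range (r+1), (k + 1 + (i:ℝ) + 1 + (j:ℝ)))
        = (∏ j ∈ Finset.range r, (k + (i:ℝ) + 2 + (j:ℝ))) * (k + (i:ℝ) + 2 + (r:ℝ)) := by
      rw [Finset.prod_range_succ]
      congr 1
      · apply Finset.prod_congr rfl; intro j _; ring
      · ring
    have hP2 : (∏ j ∈ Finset.range (r+1), (k + (i:ℝ) + 2 + (j:ℝ)))
        = (∏ j ∈ Finset.range r, (k + (i:ℝ) + 2 + (j:ℝ))) * (k + (i:ℝ) + 2 + (r:ℝ)) := by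
      rw [Finset.prod_range_succ]
    have hF1 : ((Nat.factorial (r+1) : ℝ)) = ((r:ℝ)+1) * (Nat.factorial r : ℝ) := by
      rw [Nat.factorial_succ]; push_cast; ring
    have hF2 : ((Nat.factorial (i+1) : ℝ)) = ((i:ℝ)+1) * (Nat.factorial i : ℝ) := by
      rw [Nat.factorial_succ]; push_cast; ring
    have hn : (n:ℝ) = (i:ℝ) + (r:ℝ) + 1 := by
      have : n = i + r + 1 := by omega
      rw [this]; push_cast; ring
    rw [hP1, hP2, hF1, hF2, hn]
    have h4 : (Nat.factorial r : ℝ) ≠ 0 := Nat.cast_ne_zero.mpr (Nat.factorial_ne_zero r)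
    have h5 : (Nat.factorial i : ℝ) ≠ 0 := Nat.cast_ne_zero.mpr (Nat.factorial_ne_zero i)
    have h6 : ((r:ℝ)+1) ≠ 0 := by positivity
    have h7 : ((i:ℝ)+1) ≠ 0 := by positivity
    field_simp
    ring
  rw [Finset.sum_sub_distrib, ← Finset.mul_sum, ← Finset.mul_sum] at hsum
  -- top terms
  have htop : (-1:ℝ)^n * x^(n+1) / (Nat.factorial n : ℝ)
      + ((n:ℝ)+1) * ((-1:ℝ)^(n+1) * x^(n+1) / (Nat.factorial (n+1) : ℝ)) = 0 := by
    have hF : ((Nat.factorial (n+1) : ℝ)) = ((n:ℝ)+1) * (Nat.factorial n : ℝ) := by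
      rw [Nat.factorial_succ]; push_cast; ring
    rw [hF]
    have h4 : (Nat.factorial n : ℝ) ≠ 0 := Nat.cast_ne_zero.mpr (Nat.factorial_ne_zero n)
    have h6 : ((n:ℝ)+1) ≠ 0 := by positivity
    field_simp
    ring
  have hconst : ((n:ℝ)+1) * ((∏ j ∈ Finset.range (n+1), (k + 1 + (j:ℝ))) / (Nat.factorial (n+1) : ℝ))
      - ((n:ℝ)+1+k) * ((∏ j ∈ Finset.range n, (k + 1 + (j:ℝ))) / (Nat.factorial n : ℝ)) = 0 := by
    rw [Finset.prod_range_succ]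
    have hF : ((Nat.factorial (n+1) : ℝ)) = ((n:ℝ)+1) * (Nat.factorial n : ℝ) := by
      rw [Nat.factorial_succ]; push_cast; ring
    rw [hF]
    have h4 : (Nat.factorial n : ℝ) ≠ 0 := Nat.cast_ne_zero.mpr (Nat.factorial_ne_zero n)
    have h6 : ((n:ℝ)+1) ≠ 0 := by positivity
    field_simp
    ring
  linear_combination e1 + ((n:ℝ)+1)*e2 - ((n:ℝ)+1+k)*e3 + hsum + htop + hconst

lemma lagZ_natCast (nn : ℕ) (k x : ℝ) : lagZ (nn : ℤ) k x = lag nn k x := by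
  simp [lagZ]

lemma lagZ_neg {j : ℤ} (hj : j < 0) (k x : ℝ) : lagZ j k x = 0 := by
  simp [lagZ, not_le.mpr hj]

lemma differentiable_lagZ (j : ℤ) (k : ℝ) : Differentiable ℝ (fun x => lagZ j k x) := by
  by_cases hj : 0 ≤ j
  · have : (fun x => lagZ j k x) = lag j.toNat k := by
      funext t; simp [lagZ, hj]
    rw [this]; exact differentiable_lag _ _
  · have : (fun x => lagZ j k x) = fun _ => (0:ℝ) := by
      funext t; simp [lagZ, hj]
    rw [this]; exact differentiable_const _

lemma deriv_lagZ (j : ℤ) (k : ℝ) :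
    deriv (fun x => lagZ j k x) = fun x => -lagZ (j-1) (k+1) x := by
  by_cases hj : 0 ≤ j
  · lift j to ℕ using hj with nn
    cases nn with
    | zero =>
      have h1 : (fun x => lagZ ((0:ℕ):ℤ) k x) = fun _ => (1:ℝ) := by
        funext t; rw [lagZ_natCast, lag_zero]
      rw [h1]
      funext t
      rw [deriv_const]
      rw [lagZ_neg (by norm_num)]
      norm_num
    | succ mm =>
      have h1 : (fun x => lagZ ((mm+1:ℕ):ℤ) k x) = lag (mm+1) k := by
        funext t; rw [lagZ_natCast]
      rw [h1, deriv_lag]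
      funext t
      have h2 : ((mm+1:ℕ):ℤ) - 1 = ((mm:ℕ):ℤ) := by push_cast; ring
      rw [h2, lagZ_natCast]
  · have h1 : (fun x => lagZ j k x) = fun _ => (0:ℝ) := by
      funext t; simp [lagZ, hj]
    rw [h1]
    funext t
    rw [deriv_const, lagZ_neg (by omega)]
    norm_num

lemma lagZ_R1 (j : ℤ) (k x : ℝ) :
    lagZ j (k-1) x = lagZ j k x - lagZ (j-1) k x := by
  by_cases hj : 0 ≤ j
  · lift j to ℕ using hj with nn
    cases nn with
    | zero =>
      rw [lagZ_natCast, lagZ_natCast, lagZ_neg (by norm_num), lag_zero, lag_zero]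
      ring
    | succ mm =>
      have h2 : ((mm+1:ℕ):ℤ) - 1 = ((mm:ℕ):ℤ) := by push_cast; ring
      rw [h2, lagZ_natCast, lagZ_natCast, lagZ_natCast]
      have := lag_R1 mm (k-1) x
      rw [sub_add_cancel] at this
      exact this
  · rw [lagZ_neg (by omega), lagZ_neg (by omega), lagZ_neg (by omega)]
    ring

lemma lagZ_xD (j : ℤ) (k x : ℝ) :
    x * lagZ (j-1) (k+1) x = -(j:ℝ) * lagZ j k x + ((j:ℝ)+k) * lagZ (j-1) k x := by
  by_cases hj : 1 ≤ j
  · obtain ⟨nn, rfl⟩ : ∃ nn : ℕ, j = (nn:ℤ) + 1 := ⟨(j-1).toNat, by omega⟩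
    have h2 : ((nn:ℕ):ℤ) + 1 - 1 = ((nn:ℕ):ℤ) := by ring
    rw [h2, lagZ_natCast, lagZ_natCast]
    rw [show ((nn:ℤ)+1 : ℤ) = ((nn+1 : ℕ) : ℤ) by push_cast; ring, lagZ_natCast]
    have := lag_xD nn k x
    push_cast at this ⊢
    linarith [this]
  · rw [lagZ_neg (show j - 1 < 0 by omega), lagZ_neg (show j - 1 < 0 by omega)]
    by_cases hj0 : j = 0
    · subst hj0
      rw [show ((0:ℤ):ℝ) = (0:ℝ) by norm_num]
      ring
    · rw [lagZ_neg (by omega)]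
      ring

lemma lagZ_ODE (j : ℤ) (k x : ℝ) :
    x * lagZ (j-2) (k+2) x - (k+1-x) * lagZ (j-1) (k+1) x + (j:ℝ) * lagZ j k x = 0 := by
  have h1 := lagZ_xD (j-1) (k+1) x
  rw [show j - 1 - 1 = j - 2 from by ring, show k + 1 + 1 = k + 2 from by ring] at h1
  have h2 := lagZ_xD j k x
  have h3 := lagZ_R1 (j-1) (k+1) x
  rw [show j - 1 - 1 = j - 2 from by ring, show k + 1 - 1 = k from by ring] at h3
  push_cast at h1 h2 ⊢
  linear_combination h1 + h2 + ((j:ℝ)+k) * h3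

lemma differentiable_lagZ_neg (j : ℤ) (k : ℝ) :
    Differentiable ℝ (fun x => lagZ j k (-x)) :=
  (differentiable_lagZ j k).comp differentiable_neg

lemma deriv_lagZ_neg (j : ℤ) (k : ℝ) :
    deriv (fun x => lagZ j k (-x)) = fun x => lagZ (j-1) (k+1) (-x) := by
  funext t
  rw [deriv_comp_neg (f := fun y => lagZ j k y), deriv_lagZ]
  simp

lemma deriv_comb2 (a b c d a' b' c' d' : ℝ → ℝ)
    (ha : Differentiable ℝ a) (hb : Differentiable ℝ b)
    (hc : Differentiable ℝ c) (hd : Differentiable ℝ d)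
    (hda : deriv a = a') (hdb : deriv b = b') (hdc : deriv c = c') (hdd : deriv d = d') :
    deriv (fun t => a t * b t + c t * d t)
      = fun t => a' t * b t + a t * b' t + (c' t * d t + c t * d' t) := by
  funext t
  rw [deriv_fun_add ((ha t).fun_mul (hb t)) ((hc t).fun_mul (hd t)), deriv_fun_mul (ha t) (hb t),
    deriv_fun_mul (hc t) (hd t), hda, hdb, hdc, hdd]

lemma deriv_comb4 (a b c d e f g h a' b' c' d' e' f' g' h' : ℝ → ℝ)
    (ha : Differentiable ℝ a) (hb : Differentiable ℝ b)
    (hc : Differentiable ℝ c) (hd : Differentiable ℝ d)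
    (he : Differentiable ℝ e) (hf : Differentiable ℝ f)
    (hg : Differentiable ℝ g) (hh : Differentiable ℝ h)
    (hda : deriv a = a') (hdb : deriv b = b') (hdc : deriv c = c') (hdd : deriv d = d')
    (hde : deriv e = e') (hdf : deriv f = f') (hdg : deriv g = g') (hdh : deriv h = h') :
    deriv (fun t => a t * b t + c t * d t + (e t * f t + g t * h t))
      = fun t => a' t * b t + a t * b' t + (c' t * d t + c t * d' t)
        + (e' t * f t + e t * f' t + (g' t * h t + g t * h' t)) := by
  funext t
  rw [deriv_fun_add (((ha t).fun_mul (hb t)).fun_add ((hc t).fun_mul (hd t))) (((he t).fun_mul (hf t)).fun_add ((hg t).fun_mul (hh t))),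
    deriv_fun_add ((ha t).fun_mul (hb t)) ((hc t).fun_mul (hd t)),
    deriv_fun_add ((he t).fun_mul (hf t)) ((hg t).fun_mul (hh t)),
    deriv_fun_mul (ha t) (hb t), deriv_fun_mul (hc t) (hd t),
    deriv_fun_mul (he t) (hf t), deriv_fun_mul (hg t) (hh t),
    hda, hdb, hdc, hdd, hde, hdf, hdg, hdh]

/-- The type I exceptional Laguerre polynomial satisfies the second-order
equation of the operator L^I_{k,m}, with eigenvalue m - n. -/
theorem XLaguerreI_eigenvalue_equation (k : ℝ) (m n : ℕ) (hnm : m ≤ n) (x : ℝ)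
    (hx : xi (k - 1) m x ≠ 0) :
    (fun f : ℝ → ℝ =>
      x * deriv (deriv f) x + (k + 1 - x) * deriv f x + (m : ℝ) * f x -
        2 * (deriv (xi (k - 1) m) x / xi (k - 1) m x) * (x * deriv f x + k * f x))
      (fun t => xi k m t * lag (n - m) (k - 1) t +
        xi (k - 1) m t * lagZ ((n : ℤ) - (m : ℤ) - 1) k t)
      = ((m : ℝ) - (n : ℝ)) *
        (xi k m x * lag (n - m) (k - 1) x +
          xi (k - 1) m x * lagZ ((n : ℤ) - (m : ℤ) - 1) k x) := by
  have E1 : xi k m = fun t => lagZ (m:ℤ) k (-t) := by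
    funext t; rw [xi, lagZ_natCast]
  have E2 : xi (k-1) m = fun t => lagZ (m:ℤ) (k-1) (-t) := by
    funext t; rw [xi, lagZ_natCast]
  have E3 : lag (n-m) (k-1) = fun t => lagZ ((n:ℤ)-(m:ℤ)) (k-1) t := by
    funext t
    rw [show (n:ℤ)-(m:ℤ) = ((n - m : ℕ):ℤ) by omega, lagZ_natCast]
  simp only [E1, E2, E3] at hx ⊢
  -- first derivative
  have hF1 : deriv (fun t => lagZ (m:ℤ) k (-t) * lagZ ((n:ℤ)-(m:ℤ)) (k-1) t +
        lagZ (m:ℤ) (k-1) (-t) * lagZ ((n:ℤ)-(m:ℤ)-1) k t)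
      = fun t => lagZ ((m:ℤ)-1) (k+1) (-t) * lagZ ((n:ℤ)-(m:ℤ)) (k-1) t
          + lagZ (m:ℤ) k (-t) * -lagZ ((n:ℤ)-(m:ℤ)-1) k t
          + (lagZ ((m:ℤ)-1) k (-t) * lagZ ((n:ℤ)-(m:ℤ)-1) k t
          + lagZ (m:ℤ) (k-1) (-t) * -lagZ ((n:ℤ)-(m:ℤ)-2) (k+1) t) := by
    exact deriv_comb2 _ _ _ _ _ _ _ _
      (differentiable_lagZ_neg _ _) (differentiable_lagZ _ _)
      (differentiable_lagZ_neg _ _) (differentiable_lagZ _ _)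
      (deriv_lagZ_neg _ _)
      (by rw [deriv_lagZ, show k-1+1 = k from by ring])
      (by rw [deriv_lagZ_neg, show k-1+1 = k from by ring])
      (by rw [deriv_lagZ, show (n:ℤ)-(m:ℤ)-1-1 = (n:ℤ)-(m:ℤ)-2 from by ring])
  have hF2 : deriv (fun t => lagZ ((m:ℤ)-1) (k+1) (-t) * lagZ ((n:ℤ)-(m:ℤ)) (k-1) t
          + lagZ (m:ℤ) k (-t) * -lagZ ((n:ℤ)-(m:ℤ)-1) k t
          + (lagZ ((m:ℤ)-1) k (-t) * lagZ ((n:ℤ)-(m:ℤ)-1) k t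
          + lagZ (m:ℤ) (k-1) (-t) * -lagZ ((n:ℤ)-(m:ℤ)-2) (k+1) t))
      = fun t => lagZ ((m:ℤ)-2) (k+2) (-t) * lagZ ((n:ℤ)-(m:ℤ)) (k-1) t
          + lagZ ((m:ℤ)-1) (k+1) (-t) * -lagZ ((n:ℤ)-(m:ℤ)-1) k t
          + (lagZ ((m:ℤ)-1) (k+1) (-t) * -lagZ ((n:ℤ)-(m:ℤ)-1) k t
          + lagZ (m:ℤ) k (-t) * lagZ ((n:ℤ)-(m:ℤ)-2) (k+1) t)
          + (lagZ ((m:ℤ)-2) (k+1) (-t) * lagZ ((n:ℤ)-(m:ℤ)-1) k t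
          + lagZ ((m:ℤ)-1) k (-t) * -lagZ ((n:ℤ)-(m:ℤ)-2) (k+1) t
          + (lagZ ((m:ℤ)-1) k (-t) * -lagZ ((n:ℤ)-(m:ℤ)-2) (k+1) t
          + lagZ (m:ℤ) (k-1) (-t) * lagZ ((n:ℤ)-(m:ℤ)-3) (k+2) t)) := by
    exact deriv_comb4 _ _ _ _ _ _ _ _ _ _ _ _ _ _ _ _
      (differentiable_lagZ_neg _ _) (differentiable_lagZ _ _)
      (differentiable_lagZ_neg _ _) ((differentiable_lagZ _ _).neg)
      (differentiable_lagZ_neg _ _) (differentiable_lagZ _ _)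
      (differentiable_lagZ_neg _ _) ((differentiable_lagZ _ _).neg)
      (by rw [deriv_lagZ_neg, show (m:ℤ)-1-1 = (m:ℤ)-2 from by ring,
            show k+1+1 = k+2 from by ring])
      (by rw [deriv_lagZ, show k-1+1 = k from by ring])
      (deriv_lagZ_neg _ _)
      (by funext t
          rw [deriv.fun_neg (f := fun t => lagZ ((n:ℤ)-(m:ℤ)-1) k t), deriv_lagZ,
            show (n:ℤ)-(m:ℤ)-1-1 = (n:ℤ)-(m:ℤ)-2 from by ring]
          simp)
      (by rw [deriv_lagZ_neg, show (m:ℤ)-1-1 = (m:ℤ)-2 from by ring])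
      (by rw [deriv_lagZ, show (n:ℤ)-(m:ℤ)-1-1 = (n:ℤ)-(m:ℤ)-2 from by ring])
      (by rw [deriv_lagZ_neg, show k-1+1 = k from by ring])
      (by funext t
          rw [deriv.fun_neg (f := fun t => lagZ ((n:ℤ)-(m:ℤ)-2) (k+1) t), deriv_lagZ,
            show (n:ℤ)-(m:ℤ)-2-1 = (n:ℤ)-(m:ℤ)-3 from by ring,
            show k+1+1 = k+2 from by ring]
          simp)
  have hv : deriv (fun t => lagZ (m:ℤ) (k-1) (-t)) = fun t => lagZ ((m:ℤ)-1) k (-t) := by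
    rw [deriv_lagZ_neg, show k-1+1 = k from by ring]
  rw [hF1, hF2, hv]
  beta_reduce
  -- identity instances
  have hRA := lagZ_ODE ((n:ℤ)-(m:ℤ)) (k-1) x
  rw [show k-1+2 = k+1 from by ring, show k-1+1 = k from by ring] at hRA
  have hRB := lagZ_ODE ((n:ℤ)-(m:ℤ)-1) k x
  rw [show (n:ℤ)-(m:ℤ)-1-2 = (n:ℤ)-(m:ℤ)-3 from by ring,
    show (n:ℤ)-(m:ℤ)-1-1 = (n:ℤ)-(m:ℤ)-2 from by ring] at hRB
  have hRu2 := lagZ_ODE (m:ℤ) k (-x)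
  have hRv2 := lagZ_ODE (m:ℤ) (k-1) (-x)
  rw [show k-1+2 = k+1 from by ring, show k-1+1 = k from by ring] at hRv2
  have hxu1 := lagZ_xD (m:ℤ) k (-x)
  have hc := lagZ_R1 (m:ℤ) k (-x)
  push_cast at hRA hRB hRu2 hRv2 hxu1 hc ⊢
  field_simp
  linear_combination
    (lagZ (↑m) k (-x) * lagZ (↑m) (k-1) (-x)) * hRA
    + (lagZ (↑m) (k-1) (-x) * lagZ (↑m) (k-1) (-x)) * hRB
    + (-(lagZ (↑m) (k-1) (-x) * lagZ ((n:ℤ)-(m:ℤ)) (k-1) x)) * hRu2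
    + (-(lagZ (↑m) (k-1) (-x) * lagZ ((n:ℤ)-(m:ℤ)-1) k x)) * hRv2
    + (2*(lagZ (↑m) (k-1) (-x) + lagZ ((m:ℤ)-1) k (-x)) * lagZ ((n:ℤ)-(m:ℤ)) (k-1) x
       + 2*lagZ (↑m) (k-1) (-x) * lagZ ((n:ℤ)-(m:ℤ)-1) k x) * hxu1
    + (2*((m:ℝ)+k) * lagZ ((m:ℤ)-1) k (-x) * lagZ ((n:ℤ)-(m:ℤ)) (k-1) x
       + ((2*(m:ℝ)+1) * lagZ (↑m) (k-1) (-x) - 2*x*lagZ ((m:ℤ)-1) k (-x)) * lagZ ((n:ℤ)-(m:ℤ)-1) k x) * hc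
end
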